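/- The generating function of the statistic λ(m) = C(m) + 2N(m) over all perfect matchings of {1,...,2k} factorizes as the product of odd quantum integers: Σ_m q^{λ(m)} = Π_{i=2}^{k} [2i−1]_q, where [d]_q = 1 + q + ... + q^{d−1}. -/

import Mathlib

/-- Crossings of a matching, as quadruples `a < b < c < d` with blocks `{a,c}, {b,d}`. -/
def matchCrossings (N : ℕ) (f : Fin N → Fin N) : Set (Fin N × Fin N × Fin N × Fin N) :=
  {q | q.1 < q.2.1 ∧ q.2.1 < q.2.2.1 ∧ q.2.2.1 < q.2.2.2 ∧
    f q.1 = q.2.2.1 ∧ f q.2.1 = q.2.2.2}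

/-- Nestings of a matching, as quadruples `a < b < c < d` with blocks `{a,d}, {b,c}`. -/
def matchNestings (N : ℕ) (f : Fin N → Fin N) : Set (Fin N × Fin N × Fin N × Fin N) :=
  {q | q.1 < q.2.1 ∧ q.2.1 < q.2.2.1 ∧ q.2.2.1 < q.2.2.2 ∧
    f q.1 = q.2.2.2 ∧ f q.2.1 = q.2.2.1}

open Finset

variable {n : ℕ}

def eIns (p : Fin (n+2)) (x : Fin n) : Fin (n+2) :=
  if (x:ℕ)+1 < (p:ℕ) then ⟨(x:ℕ)+1, by omega⟩ else ⟨(x:ℕ)+2, by have := x.isLt; omega⟩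

lemma eIns_val (p : Fin (n+2)) (x : Fin n) :
    (eIns p x : ℕ) = if (x:ℕ)+1 < (p:ℕ) then (x:ℕ)+1 else (x:ℕ)+2 := by
  unfold eIns; split <;> rfl

lemma eIns_lt_iff (p : Fin (n+2)) {x y : Fin n} : eIns p x < eIns p y ↔ x < y := by
  rw [Fin.lt_def, Fin.lt_def, eIns_val, eIns_val]
  split <;> split <;> omega

lemma eIns_inj (p : Fin (n+2)) {x y : Fin n} (h : eIns p x = eIns p y) : x = y := by
  have := congrArg (Fin.val) h
  rw [eIns_val, eIns_val] at this
  apply Fin.ext; split at this <;> split at this <;> omega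

lemma eIns_ne_zero (p : Fin (n+2)) (x : Fin n) : eIns p x ≠ 0 := by
  intro h; have := congrArg (Fin.val) h
  rw [eIns_val] at this; simp at this; split at this <;> omega

lemma eIns_ne_p (p : Fin (n+2)) (x : Fin n) : eIns p x ≠ p := by
  intro h; have := congrArg (Fin.val) h
  rw [eIns_val] at this; split at this <;> omega

lemma zero_lt_eIns (p : Fin (n+2)) (x : Fin n) : 0 < eIns p x :=
  Fin.pos_of_ne_zero (eIns_ne_zero p x)

lemma eIns_lt_p_iff (p : Fin (n+2)) (x : Fin n) : eIns p x < p ↔ (x:ℕ)+1 < (p:ℕ) := by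
  rw [Fin.lt_def, eIns_val]; split <;> omega

lemma exists_eIns_eq {p : Fin (n+2)} (hp : p ≠ 0) {z : Fin (n+2)} (h0 : z ≠ 0) (hzp : z ≠ p) :
    ∃ x, eIns p x = z := by
  have hp' : (p:ℕ) ≠ 0 := fun h => hp (Fin.ext h)
  have h0' : (z:ℕ) ≠ 0 := fun h => h0 (Fin.ext h)
  have hzp' : (z:ℕ) ≠ (p:ℕ) := fun h => hzp (Fin.ext h)
  have hz := z.isLt
  have hpl := p.isLt
  by_cases hlt : (z:ℕ) < (p:ℕ)
  · refine ⟨⟨(z:ℕ)-1, by omega⟩, Fin.ext ?_⟩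
    rw [eIns_val]; simp only; split <;> omega
  · refine ⟨⟨(z:ℕ)-2, by omega⟩, Fin.ext ?_⟩
    rw [eIns_val]; simp only; split <;> omega

noncomputable def insM (p : Fin (n+2)) (g : Fin n → Fin n) (y : Fin (n+2)) : Fin (n+2) :=
  if y = 0 then p else if h : ∃ x, eIns p x = y then eIns p (g h.choose) else 0

lemma insM_zero (p : Fin (n+2)) (g : Fin n → Fin n) : insM p g 0 = p := by
  unfold insM; simp

lemma insM_p {p : Fin (n+2)} (hp : p ≠ 0) (g : Fin n → Fin n) : insM p g p = 0 := by
  unfold insM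
  rw [if_neg hp, dif_neg]
  rintro ⟨x, hx⟩; exact eIns_ne_p p x hx

lemma insM_eIns (p : Fin (n+2)) (g : Fin n → Fin n) (x : Fin n) :
    insM p g (eIns p x) = eIns p (g x) := by
  unfold insM
  rw [if_neg (eIns_ne_zero p x)]
  have h : ∃ y, eIns p y = eIns p x := ⟨x, rfl⟩
  rw [dif_pos h]
  congr 1
  exact congrArg g (eIns_inj p h.choose_spec)

lemma cases3 {p : Fin (n+2)} (hp : p ≠ 0) (y : Fin (n+2)) :
    y = 0 ∨ y = p ∨ ∃ x, eIns p x = y := by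
  by_cases h0 : y = 0
  · exact Or.inl h0
  by_cases hyp : y = p
  · exact Or.inr (Or.inl hyp)
  · exact Or.inr (Or.inr (exists_eIns_eq hp h0 hyp))

variable {p : Fin (n+2)} {g : Fin n → Fin n}

lemma insM_inv (hp : p ≠ 0) (hg : ∀ x, g (g x) = x) (y : Fin (n+2)) :
    insM p g (insM p g y) = y := by
  rcases cases3 hp y with rfl | rfl | ⟨x, rfl⟩
  · rw [insM_zero, insM_p hp]
  · rw [insM_p hp, insM_zero]
  · rw [insM_eIns, insM_eIns, hg]

lemma insM_ne (hp : p ≠ 0) (hg' : ∀ x, g x ≠ x) (y : Fin (n+2)) : insM p g y ≠ y := by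
  rcases cases3 hp y with rfl | rfl | ⟨x, rfl⟩
  · rw [insM_zero]; exact hp
  · rw [insM_p hp]; exact fun h => hp h.symm
  · rw [insM_eIns]; intro h; exact hg' x (eIns_inj p h)

def crossF (N : ℕ) (f : Fin N → Fin N) : Finset (Fin N × Fin N × Fin N × Fin N) :=
  Finset.univ.filter fun q => q.1 < q.2.1 ∧ q.2.1 < q.2.2.1 ∧ q.2.2.1 < q.2.2.2 ∧
    f q.1 = q.2.2.1 ∧ f q.2.1 = q.2.2.2

def nestF (N : ℕ) (f : Fin N → Fin N) : Finset (Fin N × Fin N × Fin N × Fin N) :=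
  Finset.univ.filter fun q => q.1 < q.2.1 ∧ q.2.1 < q.2.2.1 ∧ q.2.2.1 < q.2.2.2 ∧
    f q.1 = q.2.2.2 ∧ f q.2.1 = q.2.2.1

lemma mem_crossF {N : ℕ} {f : Fin N → Fin N} {q : Fin N × Fin N × Fin N × Fin N} :
    q ∈ crossF N f ↔ q.1 < q.2.1 ∧ q.2.1 < q.2.2.1 ∧ q.2.2.1 < q.2.2.2 ∧
      f q.1 = q.2.2.1 ∧ f q.2.1 = q.2.2.2 := by
  simp [crossF]

lemma mem_nestF {N : ℕ} {f : Fin N → Fin N} {q : Fin N × Fin N × Fin N × Fin N} :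
    q ∈ nestF N f ↔ q.1 < q.2.1 ∧ q.2.1 < q.2.2.1 ∧ q.2.2.1 < q.2.2.2 ∧
      f q.1 = q.2.2.2 ∧ f q.2.1 = q.2.2.1 := by
  simp [nestF]

lemma ncard_crossF (N : ℕ) (f : Fin N → Fin N) :
    (matchCrossings N f).ncard = (crossF N f).card := by
  rw [show matchCrossings N f = ↑(crossF N f) by
    ext q; simp [matchCrossings, crossF], Set.ncard_coe_finset]

lemma ncard_nestF (N : ℕ) (f : Fin N → Fin N) :
    (matchNestings N f).ncard = (nestF N f).card := by
  rw [show matchNestings N f = ↑(nestF N f) by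
    ext q; simp [matchNestings, nestF], Set.ncard_coe_finset]

def quadEmb (p : Fin (n+2)) :
    (Fin n × Fin n × Fin n × Fin n) ↪ (Fin (n+2) × Fin (n+2) × Fin (n+2) × Fin (n+2)) :=
  ⟨fun q => (eIns p q.1, eIns p q.2.1, eIns p q.2.2.1, eIns p q.2.2.2), by
    rintro ⟨a,b,c,d⟩ ⟨a',b',c',d'⟩ h
    simp only [Prod.mk.injEq] at h
    exact Prod.ext (eIns_inj p h.1) (Prod.ext (eIns_inj p h.2.1)
      (Prod.ext (eIns_inj p h.2.2.1) (eIns_inj p h.2.2.2)))⟩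

def extraCEmb (p : Fin (n+2)) (g : Fin n → Fin n) :
    Fin n ↪ (Fin (n+2) × Fin (n+2) × Fin (n+2) × Fin (n+2)) :=
  ⟨fun x => (0, eIns p x, p, eIns p (g x)), by
    intro x y h; simp only [Prod.mk.injEq] at h; exact eIns_inj p h.2.1⟩

def extraNEmb (p : Fin (n+2)) (g : Fin n → Fin n) :
    Fin n ↪ (Fin (n+2) × Fin (n+2) × Fin (n+2) × Fin (n+2)) :=
  ⟨fun x => (0, eIns p x, eIns p (g x), p), by
    intro x y h; simp only [Prod.mk.injEq] at h; exact eIns_inj p h.2.1⟩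

lemma cross_insM (hp : p ≠ 0) :
    crossF (n+2) (insM p g) =
      ((crossF n g).map (quadEmb p)) ∪
        ((Finset.univ.filter fun x => eIns p x < p ∧ p < eIns p (g x)).map (extraCEmb p g)) := by
  ext ⟨a,b,c,d⟩
  rw [mem_crossF]
  simp only [Finset.mem_union, Finset.mem_map, Finset.mem_filter, Finset.mem_univ, true_and]
  constructor
  · rintro ⟨h1, h2, h3, h4, h5⟩
    rcases cases3 hp a with rfl | rfl | ⟨xa, rfl⟩
    · rw [insM_zero] at h4; subst h4
      rcases cases3 hp b with rfl | rfl | ⟨xb, rfl⟩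
      · exact absurd h1 (lt_irrefl _)
      · rw [insM_p hp] at h5; subst h5; exact absurd h3 (Fin.not_lt_zero _)
      · rw [insM_eIns] at h5; subst h5
        exact Or.inr ⟨xb, ⟨h2, h3⟩, rfl⟩
    · rw [insM_p hp] at h4; subst h4; exact absurd h2 (Fin.not_lt_zero _)
    · rw [insM_eIns] at h4; subst h4
      rcases cases3 hp b with rfl | rfl | ⟨xb, rfl⟩
      · exact absurd h1 (Fin.not_lt_zero _)
      · rw [insM_p hp] at h5; subst h5; exact absurd h3 (Fin.not_lt_zero _)
      · rw [insM_eIns] at h5; subst h5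
        exact Or.inl ⟨(xa, xb, g xa, g xb),
          mem_crossF.2 ⟨(eIns_lt_iff p).1 h1, (eIns_lt_iff p).1 h2, (eIns_lt_iff p).1 h3,
            rfl, rfl⟩, rfl⟩
  · rintro (⟨⟨xa, xb, xc, xd⟩, hq, he⟩ | ⟨x, ⟨hx1, hx2⟩, he⟩)
    · obtain ⟨m1, m2, m3, m4, m5⟩ := mem_crossF.1 hq
      obtain ⟨rfl, rfl, rfl, rfl⟩ : eIns p xa = a ∧ eIns p xb = b ∧ eIns p xc = c ∧
          eIns p xd = d := by
        simp only [Prod.ext_iff] at he; exact he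
      refine ⟨(eIns_lt_iff p).2 m1, (eIns_lt_iff p).2 m2, (eIns_lt_iff p).2 m3, ?_, ?_⟩
      · rw [insM_eIns, m4]
      · rw [insM_eIns, m5]
    · obtain ⟨rfl, rfl, rfl, rfl⟩ : (0 : Fin (n+2)) = a ∧ eIns p x = b ∧ p = c ∧
          eIns p (g x) = d := by
        simp only [Prod.ext_iff] at he; exact he
      exact ⟨zero_lt_eIns p x, hx1, hx2, insM_zero p g, insM_eIns p g x⟩

lemma nest_insM (hp : p ≠ 0) :
    nestF (n+2) (insM p g) =
      ((nestF n g).map (quadEmb p)) ∪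
        ((Finset.univ.filter fun x => eIns p x < eIns p (g x) ∧ eIns p (g x) < p).map
          (extraNEmb p g)) := by
  ext ⟨a,b,c,d⟩
  rw [mem_nestF]
  simp only [Finset.mem_union, Finset.mem_map, Finset.mem_filter, Finset.mem_univ, true_and]
  constructor
  · rintro ⟨h1, h2, h3, h4, h5⟩
    rcases cases3 hp a with rfl | rfl | ⟨xa, rfl⟩
    · rw [insM_zero] at h4; subst h4
      rcases cases3 hp b with rfl | rfl | ⟨xb, rfl⟩
      · exact absurd h1 (lt_irrefl _)
      · rw [insM_p hp] at h5; subst h5; exact absurd h2 (Fin.not_lt_zero _)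
      · rw [insM_eIns] at h5; subst h5
        exact Or.inr ⟨xb, ⟨h2, h3⟩, rfl⟩
    · rw [insM_p hp] at h4; subst h4; exact absurd (h2.trans h3) (Fin.not_lt_zero _)
    · rw [insM_eIns] at h4; subst h4
      rcases cases3 hp b with rfl | rfl | ⟨xb, rfl⟩
      · exact absurd h1 (Fin.not_lt_zero _)
      · rw [insM_p hp] at h5; subst h5; exact absurd h2 (Fin.not_lt_zero _)
      · rw [insM_eIns] at h5; subst h5
        exact Or.inl ⟨(xa, xb, g xb, g xa),
          mem_nestF.2 ⟨(eIns_lt_iff p).1 h1, (eIns_lt_iff p).1 h2, (eIns_lt_iff p).1 h3,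
            rfl, rfl⟩, rfl⟩
  · rintro (⟨⟨xa, xb, xc, xd⟩, hq, he⟩ | ⟨x, ⟨hx1, hx2⟩, he⟩)
    · obtain ⟨m1, m2, m3, m4, m5⟩ := mem_nestF.1 hq
      obtain ⟨rfl, rfl, rfl, rfl⟩ : eIns p xa = a ∧ eIns p xb = b ∧ eIns p xc = c ∧
          eIns p xd = d := by
        simp only [Prod.ext_iff] at he; exact he
      refine ⟨(eIns_lt_iff p).2 m1, (eIns_lt_iff p).2 m2, (eIns_lt_iff p).2 m3, ?_, ?_⟩
      · rw [insM_eIns, m4]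
      · rw [insM_eIns, m5]
    · obtain ⟨rfl, rfl, rfl, rfl⟩ : (0 : Fin (n+2)) = a ∧ eIns p x = b ∧ eIns p (g x) = c ∧
          p = d := by
        simp only [Prod.ext_iff] at he; exact he
      exact ⟨zero_lt_eIns p x, hx1, hx2, insM_zero p g, insM_eIns p g x⟩

lemma card_filter_val_lt (m : ℕ) :
    ((Finset.univ : Finset (Fin n)).filter fun x : Fin n => (x:ℕ) < m).card = min m n := by
  rw [← Finset.card_range (min m n)]
  refine Finset.card_bij (fun x _ => (x:ℕ)) ?_ ?_ ?_
  · intro a ha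
    simp only [Finset.mem_filter, Finset.mem_univ, true_and] at ha
    simp only [Finset.mem_range]
    exact lt_min ha a.isLt
  · intro a _ b _ h; exact Fin.ext h
  · intro v hv
    simp only [Finset.mem_range, lt_min_iff] at hv
    exact ⟨⟨v, hv.2⟩, by simp [hv.1], rfl⟩

lemma pairing (hg : ∀ x, g (g x) = x) (hg' : ∀ x, g x ≠ x) :
    ((Finset.univ : Finset (Fin n)).filter fun x => eIns p x < p ∧ eIns p (g x) < p).card
      = 2 * ((Finset.univ : Finset (Fin n)).filter
          fun x => eIns p x < eIns p (g x) ∧ eIns p (g x) < p).card := by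
  set Sin := (Finset.univ : Finset (Fin n)).filter fun x => eIns p x < p ∧ eIns p (g x) < p
    with hSin
  have h1 : Sin.filter (fun x => x < g x) =
      (Finset.univ : Finset (Fin n)).filter
        fun x => eIns p x < eIns p (g x) ∧ eIns p (g x) < p := by
    ext x
    simp only [hSin, Finset.mem_filter, Finset.mem_univ, true_and]
    constructor
    · rintro ⟨⟨_, h2⟩, h3⟩; exact ⟨(eIns_lt_iff p).2 h3, h2⟩
    · rintro ⟨h1', h2⟩; exact ⟨⟨h1'.trans h2, h2⟩, (eIns_lt_iff p).1 h1'⟩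
  have h2 : Sin.filter (fun x => ¬ x < g x) = Sin.filter (fun x => g x < x) := by
    ext x
    simp only [Finset.mem_filter, and_congr_right_iff]
    intro _
    constructor
    · intro h; exact lt_of_le_of_ne (not_lt.1 h) (hg' x)
    · intro h; exact not_lt.2 h.le
  have h3 : (Sin.filter (fun x => x < g x)).card = (Sin.filter (fun x => g x < x)).card := by
    refine Finset.card_bij (fun x _ => g x) ?_ ?_ ?_
    · intro a ha
      simp only [hSin, Finset.mem_filter, Finset.mem_univ, true_and, hg] at ha ⊢
      exact ⟨⟨ha.1.2, ha.1.1⟩, ha.2⟩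
    · intro a _ b _ h
      have := congrArg g h; rwa [hg, hg] at this
    · intro y hy
      simp only [hSin, Finset.mem_filter, Finset.mem_univ, true_and] at hy
      refine ⟨g y, ?_, hg y⟩
      simp only [hSin, Finset.mem_filter, Finset.mem_univ, true_and, hg]
      exact ⟨⟨hy.1.2, hy.1.1⟩, hy.2⟩
  have h4 := Finset.card_filter_add_card_filter_not (s := Sin)
    (fun x => x < g x)
  rw [h2, ← h3, h1] at h4
  omega

lemma count_step (hp : p ≠ 0) (hg : ∀ x, g (g x) = x) (hg' : ∀ x, g x ≠ x) :
    ((Finset.univ : Finset (Fin n)).filter fun x => eIns p x < p ∧ p < eIns p (g x)).card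
      + 2 * ((Finset.univ : Finset (Fin n)).filter
          fun x => eIns p x < eIns p (g x) ∧ eIns p (g x) < p).card = (p:ℕ) - 1 := by
  have hA : ((Finset.univ : Finset (Fin n)).filter fun x => eIns p x < p ∧ p < eIns p (g x))
      = ((Finset.univ : Finset (Fin n)).filter fun x => eIns p x < p).filter
          fun x => ¬ (eIns p (g x) < p) := by
    rw [Finset.filter_filter]
    apply Finset.filter_congr
    intro x _
    constructor
    · rintro ⟨h1', h2⟩; exact ⟨h1', not_lt.2 h2.le⟩
    · rintro ⟨h1', h2⟩
      exact ⟨h1', lt_of_le_of_ne (not_lt.1 h2) (Ne.symm (eIns_ne_p p (g x)))⟩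
  have hSin : ((Finset.univ : Finset (Fin n)).filter fun x => eIns p x < p).filter
      (fun x => eIns p (g x) < p)
      = (Finset.univ : Finset (Fin n)).filter fun x => eIns p x < p ∧ eIns p (g x) < p := by
    rw [Finset.filter_filter]
  have h4 := Finset.card_filter_add_card_filter_not
    (s := (Finset.univ : Finset (Fin n)).filter fun x => eIns p x < p)
    (fun x => eIns p (g x) < p)
  rw [hSin] at h4
  have hS : ((Finset.univ : Finset (Fin n)).filter fun x => eIns p x < p).card = (p:ℕ) - 1 := by
    have : ((Finset.univ : Finset (Fin n)).filter fun x => eIns p x < p)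
        = (Finset.univ : Finset (Fin n)).filter fun x : Fin n => (x:ℕ) < (p:ℕ) - 1 := by
      apply Finset.filter_congr
      intro x _
      rw [eIns_lt_p_iff]
      omega
    rw [this, card_filter_val_lt]
    have := p.isLt
    have hp' : (p:ℕ) ≠ 0 := fun h => hp (Fin.ext h)
    omega
  rw [hA, pairing hg hg'] at *
  omega

lemma lam_insM (hp : p ≠ 0) (hg : ∀ x, g (g x) = x) (hg' : ∀ x, g x ≠ x) :
    (crossF (n+2) (insM p g)).card + 2 * (nestF (n+2) (insM p g)).card
      = ((crossF n g).card + 2 * (nestF n g).card) + ((p:ℕ) - 1) := by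
  have d1 : Disjoint ((crossF n g).map (quadEmb p))
      ((Finset.univ.filter fun x => eIns p x < p ∧ p < eIns p (g x)).map (extraCEmb p g)) := by
    rw [Finset.disjoint_left]
    rintro q hq hq'
    obtain ⟨r, _, rfl⟩ := Finset.mem_map.1 hq
    obtain ⟨x, _, he⟩ := Finset.mem_map.1 hq'
    exact eIns_ne_zero p r.1 (congrArg Prod.fst he).symm
  have d2 : Disjoint ((nestF n g).map (quadEmb p))
      ((Finset.univ.filter fun x => eIns p x < eIns p (g x) ∧ eIns p (g x) < p).map
        (extraNEmb p g)) := by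
    rw [Finset.disjoint_left]
    rintro q hq hq'
    obtain ⟨r, _, rfl⟩ := Finset.mem_map.1 hq
    obtain ⟨x, _, he⟩ := Finset.mem_map.1 hq'
    exact eIns_ne_zero p r.1 (congrArg Prod.fst he).symm
  rw [cross_insM hp, nest_insM hp, Finset.card_union_of_disjoint d1,
    Finset.card_union_of_disjoint d2, Finset.card_map, Finset.card_map, Finset.card_map,
    Finset.card_map]
  have := count_step hp hg hg'
  omega

open Polynomial in
lemma step (n : ℕ) :
    (∑ f ∈ Finset.univ.filter
        (fun f : Fin (n+2) → Fin (n+2) => (∀ x, f (f x) = x) ∧ ∀ i, f i ≠ i),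
      (X : Polynomial ℤ) ^ ((crossF (n+2) f).card + 2 * (nestF (n+2) f).card)) =
    (∑ f ∈ Finset.univ.filter
        (fun f : Fin n → Fin n => (∀ x, f (f x) = x) ∧ ∀ i, f i ≠ i),
      (X : Polynomial ℤ) ^ ((crossF n f).card + 2 * (nestF n f).card)) *
    ∑ j ∈ Finset.range (n+1), (X : Polynomial ℤ) ^ j := by
  rw [Finset.sum_mul_sum, ← Finset.sum_product']
  symm
  refine Finset.sum_bij
    (i := fun a (ha : a ∈ (Finset.univ.filter
        (fun f : Fin n → Fin n => (∀ x, f (f x) = x) ∧ ∀ i, f i ≠ i)) ×ˢ Finset.range (n+1)) =>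
      insM ⟨a.2 + 1, by
        have := (Finset.mem_product.1 ha).2
        rw [Finset.mem_range] at this
        omega⟩ a.1)
    ?_ ?_ ?_ ?_
  · intro a ha
    obtain ⟨ha1, _⟩ := Finset.mem_product.1 ha
    obtain ⟨_, hg, hg'⟩ := Finset.mem_filter.1 ha1
    refine Finset.mem_filter.2 ⟨Finset.mem_univ _, insM_inv ?_ hg, insM_ne ?_ hg'⟩ <;>
    · intro h
      have := congrArg Fin.val h
      simp at this
  · intro a ha b hb h
    have h0 := congrArg (fun f => f 0) h
    simp only [insM_zero] at h0
    have hval := congrArg Fin.val h0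
    simp only at hval
    have ha2 : a.2 = b.2 := by omega
    have hfun : a.1 = b.1 := by
      funext x
      have hx := congrArg (fun f => f (eIns ⟨a.2 + 1, by
        have := (Finset.mem_product.1 ha).2
        rw [Finset.mem_range] at this; omega⟩ x)) h
      rw [insM_eIns] at hx
      rw [show (⟨b.2 + 1, _⟩ : Fin (n+2)) = ⟨a.2 + 1, by
        have := (Finset.mem_product.1 ha).2
        rw [Finset.mem_range] at this; omega⟩ from Fin.ext (by simp [ha2])] at hx
      rw [insM_eIns] at hx
      exact eIns_inj _ hx
    exact Prod.ext hfun ha2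
  · intro f hf
    obtain ⟨_, hinv, hne⟩ := Finset.mem_filter.1 hf
    set p := f 0 with hpdef
    have hp : p ≠ 0 := hne 0
    have key : ∀ x : Fin n, ∃ y : Fin n, eIns p y = f (eIns p x) := by
      intro x
      apply exists_eIns_eq hp
      · intro h
        have h2 := hinv (eIns p x)
        rw [h] at h2
        exact eIns_ne_p p x (h2.symm.trans hpdef.symm)
      · intro h
        have h2 := congrArg f h
        rw [hinv (eIns p x)] at h2
        exact eIns_ne_zero p x (h2.trans ((congrArg f hpdef).trans (hinv 0)))
    choose g0 hgspec using key
    have hginv : ∀ x, g0 (g0 x) = x := by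
      intro x; apply eIns_inj p; rw [hgspec, hgspec, hinv]
    have hgne : ∀ x, g0 x ≠ x := by
      intro x h
      have h2 := hgspec x
      rw [h] at h2
      exact hne (eIns p x) h2.symm
    have hj : (p:ℕ) - 1 < n + 1 := by have := p.isLt; omega
    refine ⟨(g0, (p:ℕ) - 1), Finset.mem_product.2
      ⟨Finset.mem_filter.2 ⟨Finset.mem_univ _, hginv, hgne⟩, Finset.mem_range.2 hj⟩, ?_⟩
    have hp' : (p:ℕ) ≠ 0 := fun h => hp (Fin.ext h)
    have heq : ∀ (h : (p:ℕ) - 1 + 1 < n + 2), (⟨(p:ℕ) - 1 + 1, h⟩ : Fin (n+2)) = p :=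
      fun h => Fin.ext (by simp; omega)
    simp only [heq]
    funext y
    rcases cases3 hp y with rfl | rfl | ⟨x, rfl⟩
    · rw [insM_zero]
    · rw [insM_p hp]; exact (hinv 0).symm
    · rw [insM_eIns, hgspec]
  · intro a ha
    obtain ⟨ha1, ha2⟩ := Finset.mem_product.1 ha
    obtain ⟨_, hg, hg'⟩ := Finset.mem_filter.1 ha1
    rw [Finset.mem_range] at ha2
    have hp : (⟨a.2 + 1, by omega⟩ : Fin (n+2)) ≠ 0 := by
      intro h; have := congrArg Fin.val h; simp at this
    have hval : ((⟨a.2 + 1, by omega⟩ : Fin (n+2)) : ℕ) - 1 = a.2 := by simp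
    rw [lam_insM hp hg hg', hval]; ring


open Polynomial in
/-- The generating function of `λ(m) = C(m) + 2N(m)` over all perfect matchings of
`{1,…,2k}` factorizes as the product of odd quantum integers `∏_{i=2}^{k} [2i−1]_q`. -/
theorem stmt10 (k : ℕ) :
    ∑ f ∈ Finset.univ.filter
        (fun f : Fin (2 * k) → Fin (2 * k) => (∀ x, f (f x) = x) ∧ ∀ i, f i ≠ i),
      (X : Polynomial ℤ) ^
        ((matchCrossings (2 * k) f).ncard + 2 * (matchNestings (2 * k) f).ncard) =
    ∏ i ∈ Finset.Icc 2 k, ∑ j ∈ Finset.range (2 * i - 1), (X : Polynomial ℤ) ^ j := by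
  have hconv : ∀ (N : ℕ) (f : Fin N → Fin N),
      (matchCrossings N f).ncard + 2 * (matchNestings N f).ncard
        = (crossF N f).card + 2 * (nestF N f).card := by
    intro N f; rw [ncard_crossF, ncard_nestF]
  simp only [hconv]
  induction k with
  | zero =>
    rw [show Finset.Icc 2 0 = ∅ from Finset.Icc_eq_empty (by omega), Finset.prod_empty]
    rw [Finset.filter_true_of_mem (fun f _ => ⟨fun x => x.elim0, fun i => i.elim0⟩)]
    have hz : ∀ f : Fin (2 * 0) → Fin (2 * 0),
        (crossF (2 * 0) f).card + 2 * (nestF (2 * 0) f).card = 0 := by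
      intro f
      have h1 : crossF (2 * 0) f = ∅ := Finset.eq_empty_of_forall_notMem (fun q _ => q.1.elim0)
      have h2 : nestF (2 * 0) f = ∅ := Finset.eq_empty_of_forall_notMem (fun q _ => q.1.elim0)
      rw [h1, h2]; rfl
    simp only [hz, pow_zero]
    rw [Finset.sum_const, Finset.card_univ]
    simp
  | succ k ih =>
    have hprod : (∏ i ∈ Finset.Icc 2 (k+1), ∑ j ∈ Finset.range (2*i-1), (X : Polynomial ℤ)^j)
        = (∏ i ∈ Finset.Icc 2 k, ∑ j ∈ Finset.range (2*i-1), (X : Polynomial ℤ)^j)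
          * ∑ j ∈ Finset.range (2*(k+1)-1), (X : Polynomial ℤ)^j := by
      cases k with
      | zero =>
        rw [show Finset.Icc 2 1 = ∅ from Finset.Icc_eq_empty (by omega),
          show Finset.Icc 2 0 = ∅ from Finset.Icc_eq_empty (by omega)]
        simp
      | succ m =>
        rw [Finset.prod_Icc_succ_top (by omega : 2 ≤ m + 1 + 1)]
    rw [hprod, ← ih]
    exact step (2 * k)
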